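/- Let G be a simple graph on n vertices with adjacency matrix A_G, and H a graph on c vertices with adjacency matrix A_H satisfying A_H·𝟙 = μ·𝟙. Let N be the adjacency matrix of the vertex corona G ∘ H, indexed by {1,…,n} ⊔ ({1,…,n} × {1,…,c}): N[i, j] = (A_G)_{ij}; N[i, (j,u)] = N[(j,u), i] = 1 if i = j and 0 otherwise; N[(i,u), (j,v)] = (A_H)_{uv} if i = j and 0 otherwise. Fix a vertex a of G and x, y ∈ ℝ^c with 𝟙ᵀx = 𝟙ᵀy = 0. If exp(i·τ·A_H)·x = γ·y for some τ > 0 and γ ∈ ℂ with |γ| = 1, then exp(i·τ·N)·(0, e_a ⊗ x) = γ·(0, e_a ⊗ y), where (0, e_a ⊗ x) is the vector supported on the a-th copy of H with values x. Conversely, if exp(i·τ·N)·(0, e_a ⊗ x) = γ·(0, e_a ⊗ y) then exp(i·τ·A_H)·x = γ·y. -/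

import Mathlib

open Matrix

/-- The transition matrix `U_R(t) = exp(i·t·R)` of a real square matrix `R`,
as a complex matrix. -/
noncomputable def U {ι : Type*} [Fintype ι] [DecidableEq ι]
    (R : Matrix ι ι ℝ) (t : ℝ) : Matrix ι ι ℂ :=
  NormedSpace.exp ((Complex.I * (t : ℂ)) • R.map (Complex.ofReal ·))

/-- If a linear embedding `E` intertwines `M` and `B` on a `B`-invariant set `P`,
then it intertwines their exponentials. -/
lemma exp_comm_aux {ι κ : Type*} [Fintype ι] [Fintype κ] [DecidableEq ι] [DecidableEq κ]
    (M : Matrix ι ι ℂ) (B : Matrix κ κ ℂ) (E : (κ → ℂ) →ₗ[ℂ] (ι → ℂ))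
    (P : (κ → ℂ) → Prop) (hP : ∀ z, P z → P (B *ᵥ z))
    (hMB : ∀ z, P z → M *ᵥ E z = E (B *ᵥ z))
    (z : κ → ℂ) (hz : P z) :
    NormedSpace.exp M *ᵥ E z = E (NormedSpace.exp B *ᵥ z) := by
  have hPk : ∀ (k : ℕ) (w : κ → ℂ), P w → P (B ^ k *ᵥ w) := by
    intro k
    induction k with
    | zero => intro w hw; simpa using hw
    | succ k ih =>
      intro w hw
      rw [pow_succ, ← mulVec_mulVec]
      exact ih _ (hP w hw)
  have hk : ∀ (k : ℕ) (w : κ → ℂ), P w → M ^ k *ᵥ E w = E (B ^ k *ᵥ w) := by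
    intro k
    induction k with
    | zero => intro w hw; simp
    | succ k ih =>
      intro w hw
      rw [pow_succ, ← mulVec_mulVec, hMB w hw, ih _ (hP w hw), mulVec_mulVec, ← pow_succ]
  letI := Matrix.linftyOpNormedAddCommGroup (α := ℂ) (m := ι) (n := ι)
  letI := Matrix.linftyOpNormedAddCommGroup (α := ℂ) (m := κ) (n := κ)
  letI := Matrix.linftyOpNormedRing (α := ℂ) (n := ι)
  letI := Matrix.linftyOpNormedRing (α := ℂ) (n := κ)
  letI := Matrix.linftyOpNormedAlgebra (R := ℂ) (α := ℂ) (n := ι)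
  letI := Matrix.linftyOpNormedAlgebra (R := ℂ) (α := ℂ) (n := κ)
  haveI : CompleteSpace (Matrix ι ι ℂ) := FiniteDimensional.complete ℂ _
  haveI : CompleteSpace (Matrix κ κ ℂ) := FiniteDimensional.complete ℂ _
  have hsM : Summable fun k : ℕ => ((Nat.factorial k : ℂ))⁻¹ • M ^ k :=
    NormedSpace.expSeries_summable' (𝕂 := ℂ) M
  have hsB : Summable fun k : ℕ => ((Nat.factorial k : ℂ))⁻¹ • B ^ k :=
    NormedSpace.expSeries_summable' (𝕂 := ℂ) B
  -- continuous linear maps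
  let Lm : Matrix ι ι ℂ →L[ℂ] (ι → ℂ) :=
    LinearMap.toContinuousLinearMap
      { toFun := fun A => A *ᵥ E z
        map_add' := fun A₁ A₂ => Matrix.add_mulVec A₁ A₂ (E z)
        map_smul' := fun r A => Matrix.smul_mulVec r A (E z) }
  let Lb : Matrix κ κ ℂ →L[ℂ] (κ → ℂ) :=
    LinearMap.toContinuousLinearMap
      { toFun := fun A => A *ᵥ z
        map_add' := fun A₁ A₂ => Matrix.add_mulVec A₁ A₂ z
        map_smul' := fun r A => Matrix.smul_mulVec r A z }
  let Ec : (κ → ℂ) →L[ℂ] (ι → ℂ) := LinearMap.toContinuousLinearMap E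
  have hsBz : Summable fun k : ℕ => ((Nat.factorial k : ℂ))⁻¹ • (B ^ k *ᵥ z) := by
    have h := hsB.mapL Lb
    simp only [Lb, LinearMap.coe_toContinuousLinearMap', LinearMap.coe_mk, AddHom.coe_mk,
      Matrix.smul_mulVec] at h
    exact h
  have e1 := Lm.map_tsum hsM
  have e2 := Lb.map_tsum hsB
  have e3 := Ec.map_tsum hsBz
  simp only [Lm, Lb, Ec, LinearMap.coe_toContinuousLinearMap', LinearMap.coe_mk,
    AddHom.coe_mk] at e1 e2 e3
  have main : NormedSpace.exp M *ᵥ E z = E (NormedSpace.exp B *ᵥ z) := by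
    simp only [NormedSpace.exp_eq_tsum ℂ]
    rw [e1, e2]
    simp only [Matrix.smul_mulVec]
    rw [e3]
    refine tsum_congr fun k => ?_
    rw [hk k z hz]
    exact (E.map_smul _ _).symm
  exact main

/-- Let `N` be the adjacency matrix of the vertex corona `G ∘ H`,
where `A_H·𝟙 = μ·𝟙`. Fix a vertex `a` of `G` and `x, y ∈ ℝ^c` with
`𝟙ᵀx = 𝟙ᵀy = 0`. Then `exp(iτA_H)·x = γ·y` (with `τ > 0`, `|γ| = 1`) if and only
if `exp(iτN)·(0, e_a ⊗ x) = γ·(0, e_a ⊗ y)`. -/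
theorem stmt15 (n c : ℕ)
    (A_G : Matrix (Fin n) (Fin n) ℝ) (hG : A_G.IsSymm)
    (A_H : Matrix (Fin c) (Fin c) ℝ) (hH : A_H.IsSymm)
    (μ : ℝ) (hμ : A_H *ᵥ (fun _ => (1 : ℝ)) = μ • fun _ => (1 : ℝ))
    (N : Matrix (Fin n ⊕ Fin n × Fin c) (Fin n ⊕ Fin n × Fin c) ℝ)
    (hN₁ : ∀ i j : Fin n, N (Sum.inl i) (Sum.inl j) = A_G i j)
    (hN₂ : ∀ (i j : Fin n) (u : Fin c),
      N (Sum.inl i) (Sum.inr (j, u)) = if i = j then 1 else 0)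
    (hN₃ : ∀ (i j : Fin n) (u : Fin c),
      N (Sum.inr (j, u)) (Sum.inl i) = if i = j then 1 else 0)
    (hN₄ : ∀ (i j : Fin n) (u v : Fin c),
      N (Sum.inr (i, u)) (Sum.inr (j, v)) = if i = j then A_H u v else 0)
    (a : Fin n) (x y : Fin c → ℝ) (hx : ∑ i, x i = 0) (hy : ∑ i, y i = 0)
    (τ : ℝ) (hτ : 0 < τ) (γ : ℂ) (hγ : ‖γ‖ = 1) :
    U A_H τ *ᵥ (fun u => (x u : ℂ)) = γ • (fun u => (y u : ℂ)) ↔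
      U N τ *ᵥ Sum.elim (0 : Fin n → ℂ) (fun p => if p.1 = a then (x p.2 : ℂ) else 0) =
        γ • Sum.elim (0 : Fin n → ℂ) (fun p => if p.1 = a then (y p.2 : ℂ) else 0) := by
  classical
  set Hc : Matrix (Fin c) (Fin c) ℂ := A_H.map (Complex.ofReal ·) with hHc
  set Nc : Matrix (Fin n ⊕ Fin n × Fin c) (Fin n ⊕ Fin n × Fin c) ℂ :=
    N.map (Complex.ofReal ·) with hNc
  set B : Matrix (Fin c) (Fin c) ℂ := (Complex.I * (τ : ℂ)) • Hc with hB
  set M : Matrix (Fin n ⊕ Fin n × Fin c) (Fin n ⊕ Fin n × Fin c) ℂ :=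
    (Complex.I * (τ : ℂ)) • Nc with hM
  -- the embedding
  let E : (Fin c → ℂ) →ₗ[ℂ] (Fin n ⊕ Fin n × Fin c → ℂ) :=
    { toFun := fun z => Sum.elim (0 : Fin n → ℂ) (fun p => if p.1 = a then z p.2 else 0)
      map_add' := by
        intro z w
        funext j
        cases j with
        | inl i => simp
        | inr p => by_cases h : p.1 = a <;> simp [h]
      map_smul' := by
        intro r z
        funext j
        cases j with
        | inl i => simp
        | inr p => by_cases h : p.1 = a <;> simp [h] }
  -- column sums of A_H are μ
  have hcol : ∀ u : Fin c, ∑ v, (A_H v u : ℂ) = (μ : ℂ) := by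
    intro u
    have h1 : ∑ v, A_H u v = μ := by
      have := congrFun hμ u
      simpa [Matrix.mulVec, dotProduct] using this
    have h2 : ∀ v, A_H v u = A_H u v := fun v => hH.apply u v
    push_cast [h2, h1]
    norm_cast
  -- the sum-zero predicate
  set P : (Fin c → ℂ) → Prop := fun z => ∑ u, z u = 0 with hPdef
  have hHcsum : ∀ z, P z → ∑ v, (Hc *ᵥ z) v = 0 := by
    intro z hz
    have : ∑ v, (Hc *ᵥ z) v = ∑ u, (∑ v, (A_H v u : ℂ)) * z u := by
      simp only [Matrix.mulVec, dotProduct, hHc, Matrix.map_apply]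
      rw [Finset.sum_comm]
      simp [Finset.sum_mul]
    rw [this]
    simp only [hcol]
    rw [← Finset.mul_sum, hz, mul_zero]
  have hP : ∀ z, P z → P (B *ᵥ z) := by
    intro z hz
    have hsm : B *ᵥ z = (Complex.I * (τ : ℂ)) • (Hc *ᵥ z) := Matrix.smul_mulVec _ _ _
    simp only [hPdef, hsm, Pi.smul_apply, smul_eq_mul]
    rw [← Finset.mul_sum, hHcsum z hz, mul_zero]
  -- the key intertwining property
  have hNE : ∀ z, P z → Nc *ᵥ E z = E (Hc *ᵥ z) := by
    intro z hz
    funext j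
    cases j with
    | inl i =>
      show ∑ j', Nc (Sum.inl i) j' * (E z) j' = 0
      rw [Fintype.sum_sum_type]
      have e1 : ∀ j : Fin n, Nc (Sum.inl i) (Sum.inl j) * (E z) (Sum.inl j) = 0 := by
        intro j; simp [E]
      have e2 : ∀ p : Fin n × Fin c,
          Nc (Sum.inl i) (Sum.inr p) * (E z) (Sum.inr p)
            = if p.1 = a then (if i = a then z p.2 else 0) else 0 := by
        rintro ⟨j, u⟩
        simp only [hNc, Matrix.map_apply, hN₂, E, LinearMap.coe_mk, AddHom.coe_mk,
          Sum.elim_inr]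
        by_cases h1 : i = j
        · by_cases h2 : i = a <;> simp [h1, h2, h1 ▸ h2]
        · by_cases h2 : j = a
          · simp [h1, h2, show ¬ i = a from fun h => h1 (h.trans h2.symm)]
          · simp [h1, h2]
      simp only [e1, e2, Finset.sum_const_zero, zero_add]
      rw [Fintype.sum_prod_type, Finset.sum_comm]
      simp only [Finset.sum_ite_eq', Finset.mem_univ, if_true]
      by_cases hia : i = a
      · simp [hia]; exact hz
      · simp [hia]
    | inr p =>
      obtain ⟨j, v⟩ := p
      show ∑ j', Nc (Sum.inr (j, v)) j' * (E z) j'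
        = if j = a then (Hc *ᵥ z) v else 0
      rw [Fintype.sum_sum_type]
      have e1 : ∀ i : Fin n, Nc (Sum.inr (j, v)) (Sum.inl i) * (E z) (Sum.inl i) = 0 := by
        intro i; simp [E]
      have e2 : ∀ p : Fin n × Fin c,
          Nc (Sum.inr (j, v)) (Sum.inr p) * (E z) (Sum.inr p)
            = if p.1 = j then (if j = a then (A_H v p.2 : ℂ) * z p.2 else 0) else 0 := by
        rintro ⟨i, u⟩
        simp only [hNc, Matrix.map_apply, hN₄, E, LinearMap.coe_mk, AddHom.coe_mk,
          Sum.elim_inr]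
        by_cases h1 : i = j
        · simp [h1, mul_ite]
        · simp [h1, show ¬ j = i from fun h => h1 h.symm]
      simp only [e1, e2, Finset.sum_const_zero, zero_add]
      rw [Fintype.sum_prod_type, Finset.sum_comm]
      simp only [Finset.sum_ite_eq', Finset.mem_univ, if_true]
      by_cases hja : j = a
      · simp [hja, Matrix.mulVec, dotProduct, hHc]
      · simp [hja]
  have hMB : ∀ z, P z → M *ᵥ E z = E (B *ᵥ z) := by
    intro z hz
    rw [hM, hB, Matrix.smul_mulVec, Matrix.smul_mulVec, hNE z hz,
      LinearMap.map_smul]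
  -- apply the abstract lemma
  have hPx : P (fun u => (x u : ℂ)) := by
    simp only [hPdef]
    push_cast [← hx]
    norm_cast
  have hkey := exp_comm_aux M B E P hP hMB (fun u => (x u : ℂ)) hPx
  have hUA : U A_H τ = NormedSpace.exp B := rfl
  have hUN : U N τ = NormedSpace.exp M := rfl
  have hEx : Sum.elim (0 : Fin n → ℂ) (fun p => if p.1 = a then (x p.2 : ℂ) else 0)
      = E (fun u => (x u : ℂ)) := rfl
  have hEy : Sum.elim (0 : Fin n → ℂ) (fun p => if p.1 = a then (y p.2 : ℂ) else 0)
      = E (fun u => (y u : ℂ)) := rfl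
  rw [hUA, hUN, hEx, hEy]
  constructor
  · intro h
    rw [hkey, h, LinearMap.map_smul]
  · intro h
    rw [hkey] at h
    have hinj : ∀ w₁ w₂ : Fin c → ℂ, E w₁ = γ • E w₂ → w₁ = γ • w₂ := by
      intro w₁ w₂ hw
      funext u
      have := congrFun hw (Sum.inr (a, u))
      simpa [E] using this
    exact hinj _ _ h
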